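/- Let P : ℝ × ℝ → ℝ be jointly continuous, and let x₁, x₂ : ℝ → ℝ be continuous functions with x₁(α) < 0 < x₂(α) for all α ≥ 0. Assume: (i) P(0, x) > 0 for every x > 0; (ii) P(α, x) < x for every α > 0 and every x ∈ ℝ. Then there exist a sequence (α_k) of positive real numbers with α_k → 0 and a sequence (m_k) of natural numbers with m_k → ∞ such that for every k, the m_k-fold iterate of the map x ↦ P(α_k, x) applied to x₂(α_k) equals x₁(α_k). -/
import Mathlib

/-- Flashing heteroclinic connections at a semi-stable limit cycle
(Poincaré-map formulation of Theorem A.1). -/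
theorem flashing_heteroclinic_at_semistable_cycle
    (P : ℝ × ℝ → ℝ) (hP : Continuous P)
    (x₁ x₂ : ℝ → ℝ) (hx₁ : Continuous x₁) (hx₂ : Continuous x₂)
    (hsign : ∀ α : ℝ, 0 ≤ α → x₁ α < 0 ∧ 0 < x₂ α)
    (h0 : ∀ x : ℝ, 0 < x → 0 < P (0, x))
    (hdec : ∀ α : ℝ, 0 < α → ∀ x : ℝ, P (α, x) < x) :
    ∃ (α : ℕ → ℝ) (m : ℕ → ℕ),
      (∀ k, 0 < α k) ∧
      Filter.Tendsto α Filter.atTop (nhds 0) ∧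
      Filter.Tendsto m Filter.atTop Filter.atTop ∧
      ∀ k, (fun x => P (α k, x))^[m k] (x₂ (α k)) = x₁ (α k) := by
  -- the iterate as a function of the parameter
  set F : ℕ → ℝ → ℝ := fun m α => (fun x => P (α, x))^[m] (x₂ α) with hF
  have hFcont : ∀ m, Continuous (F m) := by
    intro m
    induction m with
    | zero => simpa [hF] using hx₂
    | succ n ih =>
      have : (F (n + 1)) = fun α => P (α, F n α) := by
        funext α
        simp [hF, Function.iterate_succ_apply']
      rw [this]
      exact hP.comp (continuous_id.prodMk ih)
  -- at α = 0 the orbit stays positive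
  have hpos0 : ∀ m, 0 < F m 0 := by
    intro m
    induction m with
    | zero => simpa [hF] using (hsign 0 le_rfl).2
    | succ n ih =>
      have : F (n + 1) 0 = P (0, F n 0) := by
        simp [hF, Function.iterate_succ_apply']
      rw [this]
      exact h0 _ ih
  -- for every positive parameter the orbit eventually goes below x₁
  have hbelow : ∀ β : ℝ, 0 < β → ∃ m : ℕ, F m β < x₁ β := by
    intro β hβ
    by_contra hcon
    push_neg at hcon
    have hanti : StrictAnti (fun m => F m β) := by
      apply strictAnti_nat_of_succ_lt
      intro n
      have : F (n + 1) β = P (β, F n β) := by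
        simp [hF, Function.iterate_succ_apply']
      rw [this]
      exact hdec β hβ _
    have hbdd : BddBelow (Set.range fun m => F m β) := by
      refine ⟨x₁ β, ?_⟩
      rintro y ⟨m, rfl⟩
      exact hcon m
    have hlim : Filter.Tendsto (fun m => F m β) Filter.atTop
        (nhds (⨅ m, F m β)) := tendsto_atTop_ciInf hanti.antitone hbdd
    set L := ⨅ m, F m β with hL
    have hfc : Continuous fun x => P (β, x) :=
      hP.comp (continuous_const.prodMk continuous_id)
    have h1 : Filter.Tendsto (fun m => F (m + 1) β) Filter.atTop (nhds L) :=
      hlim.comp (Filter.tendsto_add_atTop_nat 1)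
    have h2 : Filter.Tendsto (fun m => P (β, F m β)) Filter.atTop
        (nhds (P (β, L))) := (hfc.tendsto L).comp hlim
    have heq : (fun m => F (m + 1) β) = fun m => P (β, F m β) := by
      funext n
      simp [hF, Function.iterate_succ_apply']
    rw [heq] at h1
    have : P (β, L) = L := tendsto_nhds_unique h2 h1
    exact absurd this (ne_of_lt (hdec β hβ L))
  -- key step: for each k find a parameter and an iterate count
  have key : ∀ k : ℕ, ∃ a : ℝ, ∃ m : ℕ, 0 < a ∧ a ≤ 1 / (k + 1) ∧ k ≤ m ∧
      F m a = x₁ a := by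
    intro k
    set β : ℝ := 1 / (k + 1) with hβdef
    have hβ : 0 < β := by positivity
    obtain ⟨m₀, hm₀⟩ := hbelow β hβ
    set m := max m₀ k with hm
    have hanti : StrictAnti (fun m => F m β) := by
      apply strictAnti_nat_of_succ_lt
      intro n
      have : F (n + 1) β = P (β, F n β) := by
        simp [hF, Function.iterate_succ_apply']
      rw [this]
      exact hdec β hβ _
    have hmlt : F m β < x₁ β :=
      lt_of_le_of_lt (hanti.antitone (le_max_left m₀ k)) hm₀
    -- intermediate value for g α := F m α - x₁ α on [0, β]
    set g : ℝ → ℝ := fun α => F m α - x₁ α with hg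
    have hgc : Continuous g := (hFcont m).sub hx₁
    have hg0 : 0 < g 0 := by
      have := (hsign 0 le_rfl).1
      have := hpos0 m
      simp only [hg]
      linarith
    have hgβ : g β < 0 := by simp only [hg]; linarith
    have h0β : (0 : ℝ) ≤ β := le_of_lt hβ
    have := intermediate_value_Icc' h0β hgc.continuousOn
    have hmem : (0 : ℝ) ∈ Set.Icc (g β) (g 0) := ⟨le_of_lt hgβ, le_of_lt hg0⟩
    obtain ⟨a, ha, hga⟩ := this hmem
    refine ⟨a, m, ?_, ha.2, le_max_right m₀ k, ?_⟩
    · rcases lt_or_eq_of_le ha.1 with h | h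
      · exact h
      · exfalso; rw [← h] at hga; rw [hga] at hg0; exact lt_irrefl 0 hg0
    · have : F m a - x₁ a = 0 := hga
      linarith
  choose a m h1 h2 h3 h4 using key
  refine ⟨a, m, h1, ?_, ?_, h4⟩
  · apply squeeze_zero (fun k => le_of_lt (h1 k)) h2
    exact tendsto_one_div_add_atTop_nhds_zero_nat
  · exact Filter.tendsto_atTop_mono h3 Filter.tendsto_id
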